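/- Let F : ℝ → ℝ be twice differentiable with |F''| ≤ L. Then for any u, v ∈ ℝ and constant A with Aτ ≥ L, the stabilized term T = F'(u)(v−u) + (1/2)F''(u)(v−u)² + Aτ(v−u)² satisfies T ≥ F(v) − F(u). -/

import Mathlib

theorem stabilized_term_estimate (F : ℝ → ℝ) (L A τ : ℝ)
    (hF : Differentiable ℝ F) (hF' : Differentiable ℝ (deriv F))
    (hL : ∀ z, |deriv (deriv F) z| ≤ L)
    (hAτ : A * τ ≥ L) (u v : ℝ) :
    deriv F u * (v - u) + (1 / 2) * deriv (deriv F) u * (v - u) ^ 2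
      + A * τ * (v - u) ^ 2 ≥ F v - F u := by
  -- F' is L-Lipschitz
  have lip : ∀ a b : ℝ, |deriv F b - deriv F a| ≤ L * |b - a| := by
    intro a b
    have := convex_univ.norm_image_sub_le_of_norm_deriv_le (f := deriv F)
      (fun x _ => hF' x) (fun x _ => by simpa using hL x) (Set.mem_univ a) (Set.mem_univ b)
    simpa [Real.norm_eq_abs] using this
  -- key Taylor bound
  have key : F v - F u - deriv F u * (v - u) ≤ L / 2 * (v - u) ^ 2 := by
    set g : ℝ → ℝ := fun w => F w - F u - deriv F u * (w - u) - L / 2 * (w - u) ^ 2 with hg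
    have hgdiff : Differentiable ℝ g := by
      apply Differentiable.sub
      apply Differentiable.sub
      apply Differentiable.sub hF (differentiable_const _)
      · exact (differentiable_const _).mul (differentiable_id.sub (differentiable_const _))
      · exact (differentiable_const _).mul
          (((differentiable_id.sub (differentiable_const _)).pow 2))
    have hgderiv : ∀ w, deriv g w = deriv F w - deriv F u - L * (w - u) := by
      intro w
      have h1 : HasDerivAt g (deriv F w - deriv F u - L * (w - u)) w := by
        have hFw := (hF w).hasDerivAt
        have h2 : HasDerivAt (fun w : ℝ => deriv F u * (w - u)) (deriv F u) w := by
          simpa using ((hasDerivAt_id w).sub_const u).const_mul (deriv F u)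
        have h3 : HasDerivAt (fun w : ℝ => L / 2 * (w - u) ^ 2) (L * (w - u)) w := by
          have := (((hasDerivAt_id w).sub_const u).pow 2).const_mul (L / 2)
          refine this.congr_deriv ?_
          simp
          ring
        exact ((hFw.sub_const (F u)).sub h2).sub h3
      exact h1.deriv
    have hgu : g u = 0 := by simp [hg]
    have hgv : g v ≤ 0 := by
      rcases le_total u v with huv | huv
      · have mono : AntitoneOn g (Set.Icc u v) := by
          apply antitoneOn_of_deriv_nonpos (convex_Icc u v) hgdiff.continuous.continuousOn
            hgdiff.differentiableOn
          intro x hx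
          rw [interior_Icc] at hx
          rw [hgderiv x]
          have := lip u x
          have hxu : |x - u| = x - u := abs_of_nonneg (by linarith [hx.1])
          rw [hxu] at this
          have := abs_le.1 this
          linarith [this.2]
        have := mono (Set.left_mem_Icc.2 huv) (Set.right_mem_Icc.2 huv) huv
        rwa [hgu] at this
      · have mono : MonotoneOn g (Set.Icc v u) := by
          apply monotoneOn_of_deriv_nonneg (convex_Icc v u) hgdiff.continuous.continuousOn
            hgdiff.differentiableOn
          intro x hx
          rw [interior_Icc] at hx
          rw [hgderiv x]
          have := lip u x
          have hxu : |x - u| = u - x := by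
            rw [abs_of_nonpos (by linarith [hx.2])]; ring
          rw [hxu] at this
          have := abs_le.1 this
          linarith [this.1]
        have := mono (Set.left_mem_Icc.2 huv) (Set.right_mem_Icc.2 huv) huv
        rwa [hgu] at this
    have : g v ≤ 0 := hgv
    simp only [hg] at this
    linarith
  have hFu := abs_le.1 (hL u)
  nlinarith [sq_nonneg (v - u)]
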